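/- Let λ₁, λ₂, λ₃ be nonzero scalars and define the 3×3 matrices A = [[λ₁, λ₁λ₃λ₂^{-1}+λ₂, λ₂], [0, λ₂, λ₂], [0, 0, λ₃]] and B = [[λ₃, 0, 0], [−λ₂, λ₂, 0], [λ₂, −λ₁λ₃λ₂^{-1}−λ₂, λ₁]]. Then ABA = BAB. -/

import Mathlib

theorem braid_dim3 {K : Type*} [Field K] (l1 l2 l3 : K)
    (h1 : l1 ≠ 0) (h2 : l2 ≠ 0) (h3 : l3 ≠ 0) :
    let A : Matrix (Fin 3) (Fin 3) K :=
      !![l1, l1 * l3 * l2⁻¹ + l2, l2; 0, l2, l2; 0, 0, l3]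
    let B : Matrix (Fin 3) (Fin 3) K :=
      !![l3, 0, 0; -l2, l2, 0; l2, -(l1 * l3 * l2⁻¹) - l2, l1]
    A * B * A = B * A * B := by
  intro A B
  show A * B * A = B * A * B
  simp only [A, B]
  ext i j
  fin_cases i <;> fin_cases j <;>
    simp [Matrix.mul_apply, Fin.sum_univ_succ] <;>
    field_simp <;> ring_nf <;> simp
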